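/- Let μ be a non-null Borel measure on a metric space (X,d) and scl a scaling. Then there exists a Borel set F ⊆ X with μ(F) > 0 such that lower-scl_B F ≤ lower-scl_Q μ and upper-scl_B F ≤ upper-scl_Q μ. In particular, lower-scl_B μ ≤ lower-scl_Q μ and upper-scl_B μ ≤ upper-scl_Q μ. -/

import Mathlib

open Filter MeasureTheory Metric Set
open scoped ENNReal Topology NNReal

noncomputable section

/-- A *scaling* is a family `(s α)_{α>0}` of positive non-decreasing functions on `(0,1)`
such that for all `α > β > 0` there is `λ₀ > 1` with, for every `λ ∈ (1, λ₀)`,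
`s α ε / s β (ε^λ) → 0` and `s α ε / (s β ε)^λ → 0` as `ε → 0⁺`. -/
def IsScaling (s : ℝ → ℝ → ℝ) : Prop :=
  (∀ α : ℝ, 0 < α → ∀ ε ∈ Set.Ioo (0:ℝ) 1, 0 < s α ε) ∧
  (∀ α : ℝ, 0 < α → MonotoneOn (s α) (Set.Ioo (0:ℝ) 1)) ∧
  (∀ α β : ℝ, 0 < β → β < α → ∃ l₀ > (1:ℝ), ∀ l ∈ Set.Ioo (1:ℝ) l₀,
    Tendsto (fun ε : ℝ => s α ε / s β (ε ^ l)) (𝓝[>] (0:ℝ)) (𝓝 0) ∧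
    Tendsto (fun ε : ℝ => s α ε / (s β ε) ^ l) (𝓝[>] (0:ℝ)) (𝓝 0))

/-- The covering number `N_ε(E)`: minimal cardinality of a finite cover of `E` by balls of
radius `ε` centered in `E` (`+∞` if there is no such finite cover). -/
def coveringNumber {X : Type*} [MetricSpace X] (E : Set X) (ε : ℝ) : ℝ≥0∞ :=
  ⨅ (t : Finset X) (_ : (↑t : Set X) ⊆ E ∧ E ⊆ ⋃ x ∈ t, ball x ε), (t.card : ℝ≥0∞)

/-- Lower box scale of a set. -/
def lowerBoxScale {X : Type*} [MetricSpace X] (s : ℝ → ℝ → ℝ) (E : Set X) : ℝ≥0∞ :=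
  ⨆ (α : ℝ) (_ : 0 < α ∧ Tendsto (fun ε : ℝ => coveringNumber E ε * ENNReal.ofReal (s α ε))
      (𝓝[>] (0:ℝ)) (𝓝 (⊤ : ℝ≥0∞))), ENNReal.ofReal α

/-- Upper box scale of a set. -/
def upperBoxScale {X : Type*} [MetricSpace X] (s : ℝ → ℝ → ℝ) (E : Set X) : ℝ≥0∞ :=
  ⨅ (α : ℝ) (_ : 0 < α ∧ Tendsto (fun ε : ℝ => coveringNumber E ε * ENNReal.ofReal (s α ε))
      (𝓝[>] (0:ℝ)) (𝓝 (0 : ℝ≥0∞))), ENNReal.ofReal α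

/-- `H_ε^φ(E)`: Hausdorff pre-measure at scale `ε`, via countable covers by balls of radii
at most `ε`. -/
def hausdorffPre {X : Type*} [MetricSpace X] (φ : ℝ → ℝ) (E : Set X) (ε : ℝ) : ℝ≥0∞ :=
  ⨅ (c : ℕ → X) (r : ℕ → ℝ) (t : Set ℕ)
    (_ : (∀ n ∈ t, r n ∈ Set.Ioc (0:ℝ) ε) ∧ E ⊆ ⋃ n ∈ t, ball (c n) (r n)),
    ∑' n : t, ENNReal.ofReal (φ (r n))

/-- `H^φ(E) = lim_{ε→0} H_ε^φ(E)`. -/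
def hausdorffMeasureOf {X : Type*} [MetricSpace X] (φ : ℝ → ℝ) (E : Set X) : ℝ≥0∞ :=
  ⨆ (ε : ℝ) (_ : 0 < ε), hausdorffPre φ E ε

/-- Hausdorff scale of a set. -/
def hausdorffScale {X : Type*} [MetricSpace X] (s : ℝ → ℝ → ℝ) (E : Set X) : ℝ≥0∞ :=
  ⨆ (α : ℝ) (_ : 0 < α ∧ hausdorffMeasureOf (s α) E = ⊤), ENNReal.ofReal α

/-- Packing scale of a set, via countable covers and upper box scales. -/
def packingScale {X : Type*} [MetricSpace X] (s : ℝ → ℝ → ℝ) (A : Set X) : ℝ≥0∞ :=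
  ⨅ (E : ℕ → Set X) (_ : (⋃ n, E n) = A), ⨆ n, upperBoxScale s (E n)

/-- Lower local scale of a measure at a point. -/
def lowerLocalScale {X : Type*} [MetricSpace X] [MeasurableSpace X]
    (s : ℝ → ℝ → ℝ) (μ : Measure X) (x : X) : ℝ≥0∞ :=
  ⨆ (α : ℝ) (_ : 0 < α ∧ Tendsto (fun ε : ℝ => μ (ball x ε) / ENNReal.ofReal (s α ε))
      (𝓝[>] (0:ℝ)) (𝓝 (0 : ℝ≥0∞))), ENNReal.ofReal α

/-- Upper local scale of a measure at a point. -/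
def upperLocalScale {X : Type*} [MetricSpace X] [MeasurableSpace X]
    (s : ℝ → ℝ → ℝ) (μ : Measure X) (x : X) : ℝ≥0∞ :=
  ⨅ (α : ℝ) (_ : 0 < α ∧ Tendsto (fun ε : ℝ => μ (ball x ε) / ENNReal.ofReal (s α ε))
      (𝓝[>] (0:ℝ)) (𝓝 (⊤ : ℝ≥0∞))), ENNReal.ofReal α

/-- Scale of a measure: infimum of the scale over Borel sets of positive measure. -/
def measureScale {X : Type*} [MetricSpace X] [MeasurableSpace X]
    (sc : Set X → ℝ≥0∞) (μ : Measure X) : ℝ≥0∞ :=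
  ⨅ (E : Set X) (_ : MeasurableSet E ∧ 0 < μ E), sc E

/-- `*`-scale of a measure: infimum of the scale over Borel sets of full measure. -/
def measureScaleStar {X : Type*} [MetricSpace X] [MeasurableSpace X]
    (sc : Set X → ℝ≥0∞) (μ : Measure X) : ℝ≥0∞ :=
  ⨅ (E : Set X) (_ : MeasurableSet E ∧ μ Eᶜ = 0), sc E

/-- Quantization number `Q_μ(ε)`. -/
def quantizationNumber {X : Type*} [MetricSpace X] [MeasurableSpace X]
    (μ : Measure X) (ε : ℝ) : ℝ≥0∞ :=
  ⨅ (t : Finset X) (_ : ∫⁻ x, (⨅ c ∈ t, edist x c) ∂μ ≤ ENNReal.ofReal ε), (t.card : ℝ≥0∞)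

/-- Lower quantization scale of a measure. -/
def lowerQuantScale {X : Type*} [MetricSpace X] [MeasurableSpace X]
    (s : ℝ → ℝ → ℝ) (μ : Measure X) : ℝ≥0∞ :=
  ⨆ (α : ℝ) (_ : 0 < α ∧ Tendsto (fun ε : ℝ => quantizationNumber μ ε * ENNReal.ofReal (s α ε))
      (𝓝[>] (0:ℝ)) (𝓝 (⊤ : ℝ≥0∞))), ENNReal.ofReal α

/-- Upper quantization scale of a measure. -/
def upperQuantScale {X : Type*} [MetricSpace X] [MeasurableSpace X]
    (s : ℝ → ℝ → ℝ) (μ : Measure X) : ℝ≥0∞ :=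
  ⨅ (α : ℝ) (_ : 0 < α ∧ Tendsto (fun ε : ℝ => quantizationNumber μ ε * ENNReal.ofReal (s α ε))
      (𝓝[>] (0:ℝ)) (𝓝 (0 : ℝ≥0∞))), ENNReal.ofReal α

/-- Packing number `Ñ_ε(E)`: maximal cardinality of an `ε`-separated subset of `E`. -/
def packingNumber {X : Type*} [MetricSpace X] (E : Set X) (ε : ℝ) : ℝ≥0∞ :=
  ⨆ (t : Finset X) (_ : (↑t : Set X) ⊆ E ∧ ∀ x ∈ t, ∀ y ∈ t, x ≠ y → ε ≤ dist x y),
    (t.card : ℝ≥0∞)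

/-- `P_ε^φ(E)`: supremum of `Σ φ(r_i)` over `ε`-packs of `E` (pairwise disjoint balls of `E`,
centered in `E`, with radii at most `ε`). -/
def packingPre {X : Type*} [MetricSpace X] (φ : ℝ → ℝ) (E : Set X) (ε : ℝ) : ℝ≥0∞ :=
  ⨆ (t : Finset (X × ℝ)) (_ : (∀ p ∈ t, p.1 ∈ E ∧ p.2 ∈ Set.Ioc (0:ℝ) ε) ∧
      (↑t : Set (X × ℝ)).Pairwise fun p q => Disjoint (ball p.1 p.2 ∩ E) (ball q.1 q.2 ∩ E)),
    ∑ p ∈ t, ENNReal.ofReal (φ p.2)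

/-- The packing pre-measure `P_0^φ(E) = lim_{ε→0} P_ε^φ(E)`. -/
def packingPre0 {X : Type*} [MetricSpace X] (φ : ℝ → ℝ) (E : Set X) : ℝ≥0∞ :=
  ⨅ (ε : ℝ) (_ : 0 < ε), packingPre φ E ε

/-- The packing `φ`-measure `P^φ(E)`. -/
def packingMeasureOf {X : Type*} [MetricSpace X] (φ : ℝ → ℝ) (E : Set X) : ℝ≥0∞ :=
  ⨅ (F : ℕ → Set X) (_ : (⋃ n, F n) = E), ∑' n, packingPre0 φ (F n)


section Aux

variable {X : Type*} [MetricSpace X] [MeasurableSpace X] [BorelSpace X]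

lemma aux_measurable (t : Finset X) : Measurable fun x : X => ⨅ c ∈ t, edist x c := by
  classical
  induction t using Finset.induction_on with
  | empty => simpa using measurable_const
  | @insert a u ha ih =>
      have h : (fun x : X => ⨅ c ∈ insert a u, edist x c)
          = fun x : X => min (edist x a) (⨅ c ∈ u, edist x c) := by
        funext x
        rw [Finset.iInf_insert]
      rw [h]
      exact ((continuous_id.edist continuous_const).measurable).min ih

lemma aux_quant_anti (μ : Measure X) {x y : ℝ} (h : x ≤ y) :
    quantizationNumber μ y ≤ quantizationNumber μ x :=
  le_iInf₂ fun t ht => iInf₂_le t (ht.trans (ENNReal.ofReal_le_ofReal h))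

lemma aux_exists_centers (μ : Measure X) (δ : ℝ)
    (hQ : quantizationNumber μ δ ≠ ⊤) :
    ∃ t : Finset X, (∫⁻ x, (⨅ c ∈ t, edist x c) ∂μ) ≤ ENNReal.ofReal δ ∧
      (t.card : ℝ≥0∞) ≤ quantizationNumber μ δ + 1 := by
  have h : quantizationNumber μ δ < quantizationNumber μ δ + 1 :=
    ENNReal.lt_add_right hQ one_ne_zero
  conv_lhs at h => rw [quantizationNumber]
  rw [iInf_lt_iff] at h
  obtain ⟨t, ht⟩ := h
  rw [iInf_lt_iff] at ht
  obtain ⟨hcond, hlt⟩ := ht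
  exact ⟨t, hcond, hlt.le⟩

lemma aux_s_tendsto {s : ℝ → ℝ → ℝ} (hs : IsScaling s) {β : ℝ} (hβ : 0 < β) :
    Tendsto (s β) (𝓝[>] (0:ℝ)) (𝓝 0) := by
  obtain ⟨l₀, hl₀, H⟩ := hs.2.2 β (β/2) (by positivity) (half_lt_self hβ)
  set l := (1 + l₀)/2 with hldef
  have hl1 : 1 < l := by rw [hldef]; linarith
  have hl2 : l < l₀ := by rw [hldef]; linarith
  obtain ⟨-, h2⟩ := H l ⟨hl1, hl2⟩
  set C := max ((s (β/2) (1/2)) ^ l) 1 with hC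
  have hC0 : (0:ℝ) < C := lt_of_lt_of_le one_pos (le_max_right _ _)
  apply squeeze_zero' (g := fun ε => (s β ε / (s (β/2) ε) ^ l) * C)
  · filter_upwards [Ioo_mem_nhdsGT_of_mem (show (0:ℝ) ∈ Ico (0:ℝ) 1 by constructor <;> norm_num)]
      with ε hε
    exact (hs.1 β hβ ε hε).le
  · filter_upwards [Ioo_mem_nhdsGT_of_mem (show (0:ℝ) ∈ Ico (0:ℝ) (1/2) by constructor <;> norm_num)]
      with ε hε
    have hε1 : ε ∈ Ioo (0:ℝ) 1 := ⟨hε.1, by linarith [hε.2]⟩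
    have hs2pos : 0 < s (β/2) ε := hs.1 (β/2) (by positivity) ε hε1
    have hD0 : 0 < (s (β/2) ε) ^ l := Real.rpow_pos_of_pos hs2pos l
    have hDC : (s (β/2) ε) ^ l ≤ C := by
      have hmono := hs.2.1 (β/2) (by positivity) hε1
        (show (1/2:ℝ) ∈ Ioo (0:ℝ) 1 by constructor <;> norm_num) hε.2.le
      exact (Real.rpow_le_rpow hs2pos.le hmono (by linarith)).trans (le_max_left _ _)
    have hid : s β ε = (s β ε / (s (β/2) ε) ^ l) * ((s (β/2) ε) ^ l) := by
      field_simp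
    exact le_trans (le_of_eq hid) (mul_le_mul_of_nonneg_left hDC
      (div_nonneg (hs.1 β hβ ε hε1).le hD0.le))
  · simpa using h2.mul_const C

lemma aux_s_compare {s : ℝ → ℝ → ℝ} (hs : IsScaling s) {α β : ℝ} (hβ : 0 < β) (hαβ : β < α) :
    ∃ l : ℝ, 1 < l ∧ ∀ᶠ ε in 𝓝[>] (0:ℝ), s α ε ≤ s β (ε ^ l) := by
  obtain ⟨l₀, hl₀, H⟩ := hs.2.2 α β hβ hαβ
  set l := (1 + l₀)/2 with hldef
  have hl1 : 1 < l := by rw [hldef]; linarith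
  have hl2 : l < l₀ := by rw [hldef]; linarith
  obtain ⟨h1, -⟩ := H l ⟨hl1, hl2⟩
  refine ⟨l, hl1, ?_⟩
  filter_upwards [h1.eventually_lt_const one_pos,
    Ioo_mem_nhdsGT_of_mem (show (0:ℝ) ∈ Ico (0:ℝ) 1 by constructor <;> norm_num)] with ε h hε
  have hεl : ε ^ l ∈ Ioo (0:ℝ) 1 :=
    ⟨Real.rpow_pos_of_pos hε.1 l, Real.rpow_lt_one hε.1.le hε.2 (by linarith)⟩
  have hden : 0 < s β (ε ^ l) := hs.1 β hβ _ hεl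
  exact le_of_lt ((div_lt_one hden).1 h)

lemma aux_cover {X : Type*} [MetricSpace X] (F : Set X) (C : Finset X) (r η : ℝ)
    (hr : 0 < r) (hη : 2*r ≤ η)
    (hF : ∀ x ∈ F, (⨅ c ∈ C, edist x c) < ENNReal.ofReal r) :
    coveringNumber F η ≤ (C.card : ℝ≥0∞) := by
  classical
  set P : X → Prop := fun c => ∃ x, x ∈ F ∧ edist x c < ENNReal.ofReal r with hP
  set g : X → X := fun c => if h : P c then h.choose else c with hgdef
  have hg : ∀ c, P c → g c ∈ F ∧ edist (g c) c < ENNReal.ofReal r := by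
    intro c h
    have hspec := h.choose_spec
    simp only [hgdef, dif_pos h]
    exact hspec
  set t := (C.filter P).image g with ht
  have h1 : (↑t : Set X) ⊆ F := by
    intro y hy
    simp only [ht, Finset.coe_image, Set.mem_image, Finset.mem_coe, Finset.mem_filter] at hy
    obtain ⟨c, ⟨hcC, hcP⟩, rfl⟩ := hy
    exact (hg c hcP).1
  have h2 : F ⊆ ⋃ y ∈ t, ball y η := by
    intro x hx
    have hx' := hF x hx
    have hex : ∃ c ∈ C, edist x c < ENNReal.ofReal r := by
      by_contra hcon
      push_neg at hcon
      exact absurd hx' (not_lt.2 (le_iInf₂ hcon))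
    obtain ⟨c, hcC, hce⟩ := hex
    have hPc : P c := ⟨x, hx, hce⟩
    refine mem_iUnion₂.2 ⟨g c, ?_, ?_⟩
    · exact Finset.mem_image.2 ⟨c, Finset.mem_filter.2 ⟨hcC, hPc⟩, rfl⟩
    · have hd1 : dist x c < r := by rwa [edist_lt_ofReal] at hce
      have hd2 : dist (g c) c < r := by
        have := (hg c hPc).2
        rwa [edist_lt_ofReal] at this
      rw [mem_ball]
      have htri := dist_triangle x c (g c)
      rw [dist_comm c (g c)] at htri
      linarith
  refine le_trans (iInf₂_le t ⟨h1, h2⟩) ?_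
  have : t.card ≤ C.card := (Finset.card_image_le).trans (Finset.card_filter_le _ _)
  exact_mod_cast this

lemma aux_ofReal_le (Y : ℝ≥0∞) {α : ℝ} (hα : 0 < α)
    (h : ∀ γ : ℝ, 0 < γ → γ < α → ENNReal.ofReal γ ≤ Y) : ENNReal.ofReal α ≤ Y := by
  have h1 : Tendsto (fun n : ℕ => ((n:ℝ)+2)) atTop atTop :=
    tendsto_atTop_add_const_right _ 2 tendsto_natCast_atTop_atTop
  have h2 : Tendsto (fun n : ℕ => α/((n:ℝ)+2)) atTop (𝓝 0) :=
    Tendsto.div_atTop tendsto_const_nhds h1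
  have hseq : Tendsto (fun n : ℕ => ENNReal.ofReal (α - α/((n:ℝ)+2))) atTop
      (𝓝 (ENNReal.ofReal α)) := by
    apply ENNReal.tendsto_ofReal
    simpa using tendsto_const_nhds.sub h2
  refine le_of_tendsto' hseq fun n => ?_
  have hd : 0 < α/((n:ℝ)+2) := by positivity
  have hd2 : α/((n:ℝ)+2) < α := by
    apply div_lt_self hα
    have : (0:ℝ) ≤ (n:ℝ) := Nat.cast_nonneg n
    linarith
  exact h _ (by linarith) (by linarith)

lemma aux_le_ofReal (Y : ℝ≥0∞) {β : ℝ}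
    (h : ∀ γ : ℝ, β < γ → Y ≤ ENNReal.ofReal γ) : Y ≤ ENNReal.ofReal β := by
  have h1 : Tendsto (fun n : ℕ => ((n:ℝ)+1)) atTop atTop :=
    tendsto_atTop_add_const_right _ 1 tendsto_natCast_atTop_atTop
  have h2 : Tendsto (fun n : ℕ => (1:ℝ)/((n:ℝ)+1)) atTop (𝓝 0) :=
    Tendsto.div_atTop tendsto_const_nhds h1
  have hseq : Tendsto (fun n : ℕ => ENNReal.ofReal (β + 1/((n:ℝ)+1))) atTop
      (𝓝 (ENNReal.ofReal β)) := by
    apply ENNReal.tendsto_ofReal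
    simpa using tendsto_const_nhds.add h2
  refine ge_of_tendsto' hseq fun n => ?_
  have : (0:ℝ) < 1/((n:ℝ)+1) := by positivity
  exact h _ (by linarith)

end Aux

set_option maxHeartbeats 2000000 in
/-- For a non-null Borel measure `μ` there is a Borel set `F` of positive measure whose
box scales are bounded by the quantization scales of `μ`; in particular the box scales
of `μ` are at most its quantization scales. -/
theorem exists_posMeasure_set_boxScale_le_quantScale
    {X : Type*} [MetricSpace X] [MeasurableSpace X] [BorelSpace X]
    (μ : Measure X) (hμ : μ ≠ 0) (s : ℝ → ℝ → ℝ) (hs : IsScaling s) :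
    (∃ F : Set X, MeasurableSet F ∧ 0 < μ F ∧
      lowerBoxScale s F ≤ lowerQuantScale s μ ∧ upperBoxScale s F ≤ upperQuantScale s μ) ∧
    measureScale (lowerBoxScale s) μ ≤ lowerQuantScale s μ ∧
    measureScale (upperBoxScale s) μ ≤ upperQuantScale s μ := by
  classical
  suffices hmain : ∃ F : Set X, MeasurableSet F ∧ 0 < μ F ∧
      lowerBoxScale s F ≤ lowerQuantScale s μ ∧ upperBoxScale s F ≤ upperQuantScale s μ by
    obtain ⟨F, h1, h2, h3, h4⟩ := hmain
    refine ⟨⟨F, h1, h2, h3, h4⟩, ?_, ?_⟩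
    · exact le_trans (iInf₂_le F ⟨h1, h2⟩) h3
    · exact le_trans (iInf₂_le F ⟨h1, h2⟩) h4
  by_cases hatom : ∃ x : X, 0 < μ {x}
  -- Case 1 : an atom
  · obtain ⟨x, hx⟩ := hatom
    have hcov1 : ∀ ε : ℝ, 0 < ε → coveringNumber ({x} : Set X) ε ≤ 1 := by
      intro ε hε
      refine le_trans (iInf₂_le ({x} : Finset X) ⟨by simp, ?_⟩) (by simp)
      intro y hy
      rw [Set.mem_singleton_iff] at hy
      subst hy
      exact mem_iUnion₂.2 ⟨y, by simp, mem_ball_self hε⟩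
    have hsing : ∀ γ : ℝ, 0 < γ →
        Tendsto (fun ε : ℝ => coveringNumber ({x} : Set X) ε * ENNReal.ofReal (s γ ε))
          (𝓝[>] (0:ℝ)) (𝓝 0) := by
      intro γ hγ
      rw [ENNReal.tendsto_nhds_zero]
      intro c hc
      have h0 : Tendsto (fun ε : ℝ => ENNReal.ofReal (s γ ε)) (𝓝[>] (0:ℝ)) (𝓝 0) := by
        simpa using ENNReal.tendsto_ofReal (aux_s_tendsto hs hγ)
      filter_upwards [ENNReal.tendsto_nhds_zero.1 h0 c hc, self_mem_nhdsWithin]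
        with ε h1 h2
      calc coveringNumber ({x} : Set X) ε * ENNReal.ofReal (s γ ε)
          ≤ 1 * ENNReal.ofReal (s γ ε) := mul_le_mul' (hcov1 ε h2) le_rfl
        _ = ENNReal.ofReal (s γ ε) := one_mul _
        _ ≤ c := h1
    refine ⟨{x}, measurableSet_singleton x, hx, ?_, ?_⟩
    · refine iSup₂_le fun γ hγ => ?_
      exact absurd (tendsto_nhds_unique hγ.2 (hsing γ hγ.1)) (by simp)
    · have h0 : upperBoxScale s ({x} : Set X) ≤ ENNReal.ofReal 0 :=
        aux_le_ofReal _ fun γ hγ => iInf₂_le γ ⟨hγ, hsing γ hγ⟩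
      rw [ENNReal.ofReal_zero] at h0
      exact h0.trans zero_le
  by_cases hfin : ∀ ε : ℝ, 0 < ε → quantizationNumber μ ε ≠ ⊤
  · -- Case 3 : the main construction
    push_neg at hatom
    have hatom' : ∀ x : X, μ {x} = 0 := fun x => le_zero_iff.1 (hatom x)
    -- a set E₀ of finite positive measure
    obtain ⟨C₀, hC₀int, -⟩ := aux_exists_centers μ 1 (hfin 1 one_pos)
    set f₀ : X → ℝ≥0∞ := fun x => ⨅ c ∈ C₀, edist x c with hf₀def
    have hf₀ : Measurable f₀ := aux_measurable C₀
    have hC₀null : μ (↑C₀ : Set X) = 0 := by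
      have : (↑C₀ : Set X) = ⋃ c ∈ (↑C₀ : Set X), {c} := (Set.biUnion_of_singleton _).symm
      rw [this, measure_biUnion_null_iff (C₀.countable_toSet)]
      exact fun c _ => hatom' c
    have hpos0 : 0 < μ {x | 0 < f₀ x} := by
      have hsub : (↑C₀ : Set X)ᶜ ⊆ {x | 0 < f₀ x} := by
        intro x hx
        have hall : ∀ c ∈ C₀, 0 < edist x c := by
          intro c hc
          refine edist_pos.2 fun h => hx ?_
          rw [h]
          exact hc
        have : f₀ x = C₀.inf (fun c => edist x c) := (Finset.inf_eq_iInf _ _).symm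
        rw [Set.mem_setOf_eq, this, Finset.lt_inf_iff (by simp : (0:ℝ≥0∞) < ⊤)]
        exact hall
      refine lt_of_lt_of_le ?_ (measure_mono hsub)
      by_contra h
      push_neg at h
      have h0 : μ (↑C₀ : Set X)ᶜ = 0 := le_zero_iff.1 h
      have : μ Set.univ = 0 := by
        have := measure_union_le (μ := μ) (↑C₀ : Set X)ᶜ (↑C₀ : Set X)
        rw [Set.compl_union_self, h0, hC₀null] at this
        simpa using this
      exact absurd this (Measure.measure_univ_pos.2 hμ).ne'
    set S : ℕ → Set X := fun n => {x | ((n:ℝ≥0∞)+1)⁻¹ < f₀ x} with hSdef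
    have hSmeas : ∀ n, MeasurableSet (S n) := fun n => measurableSet_lt measurable_const hf₀
    have hSmono : Monotone S := by
      intro n m hnm x hx
      simp only [hSdef, Set.mem_setOf_eq] at hx ⊢
      refine lt_of_le_of_lt ?_ hx
      exact ENNReal.inv_le_inv.2 (add_le_add (by exact_mod_cast hnm) le_rfl)
    have hSU : {x | 0 < f₀ x} = ⋃ n, S n := by
      ext x
      simp only [Set.mem_setOf_eq, Set.mem_iUnion, hSdef]
      constructor
      · intro h
        obtain ⟨n, hn⟩ := ENNReal.exists_inv_nat_lt h.ne'
        exact ⟨n, lt_of_le_of_lt (ENNReal.inv_le_inv.2 le_self_add) hn⟩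
      · rintro ⟨n, hn⟩
        exact lt_of_le_of_lt zero_le hn
    obtain ⟨n₀, hn₀⟩ : ∃ n, 0 < μ (S n) := by
      by_contra h
      push_neg at h
      have h' : ∀ n, μ (S n) = 0 := fun n => le_zero_iff.1 (h n)
      have : μ {x | 0 < f₀ x} = 0 := by
        rw [hSU, Monotone.measure_iUnion hSmono]
        simp [h']
      exact absurd this hpos0.ne'
    set E₀ : Set X := S n₀ with hE₀def
    have hE₀meas : MeasurableSet E₀ := hSmeas n₀
    have hE₀top : μ E₀ ≠ ⊤ := by
      have hsub : E₀ ⊆ {x | ((n₀:ℝ≥0∞)+1)⁻¹ ≤ f₀ x} := fun x hx =>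
        le_of_lt (show ((n₀:ℝ≥0∞)+1)⁻¹ < f₀ x from hx)
      have hmark := meas_ge_le_lintegral_div (μ := μ) hf₀.aemeasurable
        (ε := ((n₀:ℝ≥0∞)+1)⁻¹)
        (ENNReal.inv_ne_zero.2 (by simp))
        (ENNReal.inv_ne_top.2 (by simp))
      have h1 : μ E₀ ≤ ENNReal.ofReal 1 / ((n₀:ℝ≥0∞)+1)⁻¹ :=
        (measure_mono hsub).trans (hmark.trans (ENNReal.div_le_div_right hC₀int _))
      exact (lt_of_le_of_lt h1 (ENNReal.div_lt_top ENNReal.ofReal_ne_top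
        (ENNReal.inv_ne_zero.2 (by simp)))).ne
    -- the constants
    set m' : ℝ := min (μ E₀).toReal 1 with hm'def
    have hm' : 0 < m' := lt_min (ENNReal.toReal_pos hn₀.ne' hE₀top) one_pos
    have hm'1 : m' ≤ 1 := min_le_right _ _
    set a : ℝ := m'/100 with hadef
    have ha0 : 0 < a := by positivity
    have ha1 : a ≤ 1/100 := by rw [hadef]; linarith
    have ha2 : a < 1 := by linarith
    have ha12 : a ≤ 1/2 := by linarith
    have ha3 : 3*a ≤ 1 := by linarith
    -- the sequences of scales and radii
    set r : ℕ → ℝ := fun j => a ^ (j*j+4*j+4) with hrdef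
    set δ : ℕ → ℝ := fun j => a ^ (j*j+5*j+5) with hδdef
    have hr0 : ∀ j, 0 < r j := fun j => pow_pos ha0 _
    have hδ0 : ∀ j, 0 < δ j := fun j => pow_pos ha0 _
    have hrlea : ∀ j, r j ≤ a := fun j =>
      pow_le_of_le_one ha0.le ha2.le (by omega)
    have hδlea : ∀ j, δ j ≤ a := fun j =>
      pow_le_of_le_one ha0.le ha2.le (by omega)
    have hr1 : ∀ j, r j < 1 := fun j => lt_of_le_of_lt (hrlea j) ha2
    have hδ1 : ∀ j, δ j < 1 := fun j => lt_of_le_of_lt (hδlea j) ha2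
    have h3r1 : ∀ j, 3 * r j < 1 := by
      intro j
      have := hrlea j
      nlinarith
    have hranti : Antitone r := by
      intro i j hij
      refine pow_le_pow_of_le_one ha0.le ha2.le ?_
      have h1 : i*i ≤ j*j := Nat.mul_le_mul hij hij
      have h2 : 4*i ≤ 4*j := Nat.mul_le_mul_left 4 hij
      exact Nat.add_le_add (Nat.add_le_add h1 h2) le_rfl
    have hδanti : StrictAnti δ := by
      intro i j hij
      refine pow_lt_pow_right_of_lt_one₀ ha0 ha2 ?_
      have h1 : i*i ≤ j*j := Nat.mul_le_mul hij.le hij.le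
      have h2 : 5*i < 5*j := by omega
      exact Nat.add_lt_add_right (Nat.add_lt_add_of_le_of_lt h1 h2) 5
    have hrtend : Tendsto r atTop (𝓝 0) := by
      refine squeeze_zero (fun j => (hr0 j).le) (fun j => ?_)
        (tendsto_pow_atTop_nhds_zero_of_lt_one ha0.le ha2)
      exact pow_le_pow_of_le_one ha0.le ha2.le (by nlinarith)
    have hδtend : Tendsto δ atTop (𝓝 0) := by
      refine squeeze_zero (fun j => (hδ0 j).le) (fun j => ?_)
        (tendsto_pow_atTop_nhds_zero_of_lt_one ha0.le ha2)
      exact pow_le_pow_of_le_one ha0.le ha2.le (by nlinarith)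
    have h3rtend : Tendsto (fun j => 3 * r j) atTop (𝓝 0) := by
      simpa using hrtend.const_mul 3
    have h3rtend' : Tendsto (fun j => 3 * r j) atTop (𝓝[>] (0:ℝ)) :=
      tendsto_nhdsWithin_of_tendsto_nhds_of_eventually_within _ h3rtend
        (Eventually.of_forall fun j => mem_Ioi.2 (by positivity))
    have hδtend' : Tendsto δ atTop (𝓝[>] (0:ℝ)) :=
      tendsto_nhdsWithin_of_tendsto_nhds_of_eventually_within _ hδtend
        (Eventually.of_forall fun j => mem_Ioi.2 (hδ0 j))
    have hδexp : ∀ j, δ j = r j * a ^ (j+1) := by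
      intro j
      rw [hrdef, hδdef]
      simp only []
      rw [← pow_add]
      congr 1
      ring
    -- the centers
    have hcenters := fun j => aux_exists_centers μ (δ j) (hfin _ (hδ0 j))
    choose C hCint hCcard using hcenters
    -- bad sets
    set B : ℕ → Set X := fun j => {x | ENNReal.ofReal (r j) ≤ ⨅ c ∈ C j, edist x c} with hBdef
    have hμB : ∀ j, μ (B j) ≤ ENNReal.ofReal (a^(j+1)) := by
      intro j
      have h1 := meas_ge_le_lintegral_div (μ := μ) (aux_measurable (C j)).aemeasurable
        (ε := ENNReal.ofReal (r j)) (ENNReal.ofReal_pos.2 (hr0 j)).ne' ENNReal.ofReal_ne_top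
      refine h1.trans ?_
      have h2 : ENNReal.ofReal (δ j) / ENNReal.ofReal (r j) = ENNReal.ofReal (a^(j+1)) := by
        rw [hδexp j, ENNReal.ofReal_mul (hr0 j).le, mul_comm, mul_div_assoc,
          ENNReal.div_self (ENNReal.ofReal_pos.2 (hr0 j)).ne' ENNReal.ofReal_ne_top, mul_one]
      rw [← h2]
      exact ENNReal.div_le_div_right (hCint j) _
    set F : Set X := E₀ \ ⋃ j, B j with hFdef
    have hFmeas : MeasurableSet F := hE₀meas.diff (MeasurableSet.iUnion fun j =>
      measurableSet_le measurable_const (aux_measurable (C j)))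
    have hμU : μ (⋃ j, B j) ≤ ENNReal.ofReal a * 2 := by
      calc μ (⋃ j, B j) ≤ ∑' j, μ (B j) := measure_iUnion_le _
        _ ≤ ∑' j, ENNReal.ofReal (a^(j+1)) := ENNReal.tsum_le_tsum hμB
        _ = ∑' j, ENNReal.ofReal a ^ (j+1) := by
            congr 1; funext j; rw [ENNReal.ofReal_pow ha0.le]
        _ = ENNReal.ofReal a * ∑' j, ENNReal.ofReal a ^ j := by
            rw [← ENNReal.tsum_mul_left]
            congr 1; funext j; rw [pow_succ']
        _ = ENNReal.ofReal a * (1 - ENNReal.ofReal a)⁻¹ := by rw [ENNReal.tsum_geometric]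
        _ ≤ ENNReal.ofReal a * 2 := by
            refine mul_le_mul' le_rfl ?_
            have hofhalf : ENNReal.ofReal (1/2) = (2:ℝ≥0∞)⁻¹ := by
              rw [ENNReal.ofReal_div_of_pos (by norm_num : (0:ℝ) < 2), ENNReal.ofReal_one,
                ENNReal.ofReal_ofNat, one_div]
            have hx : ENNReal.ofReal a ≤ 2⁻¹ := by
              rw [← hofhalf]
              exact ENNReal.ofReal_le_ofReal ha12
            have h1 : (2:ℝ≥0∞)⁻¹ ≤ 1 - ENNReal.ofReal a := by
              refine ENNReal.le_sub_of_add_le_left ENNReal.ofReal_ne_top ?_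
              calc ENNReal.ofReal a + 2⁻¹ ≤ 2⁻¹ + 2⁻¹ := by gcongr
                _ = 1 := ENNReal.inv_two_add_inv_two
            calc (1 - ENNReal.ofReal a)⁻¹ ≤ ((2:ℝ≥0∞)⁻¹)⁻¹ := ENNReal.inv_le_inv.2 h1
              _ = 2 := inv_inv 2
    have hμF : 0 < μ F := by
      rcases (zero_le : 0 ≤ μ F).lt_or_eq with h | h
      · exact h
      exfalso
      have hE₀sub : E₀ ⊆ F ∪ ⋃ j, B j := by
        intro x hx
        by_cases hxU : x ∈ ⋃ j, B j
        · exact Or.inr hxU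
        · exact Or.inl ⟨hx, hxU⟩
      have h1 : μ E₀ ≤ μ F + μ (⋃ j, B j) := (measure_mono hE₀sub).trans (measure_union_le _ _)
      rw [← h, zero_add] at h1
      have h2 : ENNReal.ofReal m' ≤ μ E₀ := by
        calc ENNReal.ofReal m' ≤ ENNReal.ofReal (μ E₀).toReal :=
              ENNReal.ofReal_le_ofReal (min_le_left _ _)
          _ = μ E₀ := ENNReal.ofReal_toReal hE₀top
      have h3 : ENNReal.ofReal m' ≤ ENNReal.ofReal (a*2) := by
        rw [show ENNReal.ofReal (a*2) = ENNReal.ofReal a * 2 by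
          rw [ENNReal.ofReal_mul ha0.le, ENNReal.ofReal_ofNat]]
        exact h2.trans (h1.trans hμU)
      have h4 : m' ≤ a*2 := (ENNReal.ofReal_le_ofReal_iff (by positivity)).1 h3
      rw [hadef] at h4
      linarith
    have hFgood : ∀ j, ∀ x ∈ F, (⨅ c ∈ C j, edist x c) < ENNReal.ofReal (r j) := by
      intro j x hx
      by_contra h
      push_neg at h
      exact hx.2 (Set.mem_iUnion.2 ⟨j, h⟩)
    have hcov : ∀ (j : ℕ) (η : ℝ), 3 * r j ≤ η →
        coveringNumber F η ≤ quantizationNumber μ (δ j) + 1 := by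
      intro j η hη
      exact (aux_cover F (C j) (r j) η (hr0 j) (by linarith [hr0 j]) (hFgood j)).trans (hCcard j)
    have hstar : ∀ α β : ℝ, 0 < β → β < α →
        ∀ᶠ j in atTop, s α (3 * r j) ≤ s β (δ (j+1)) := by
      intro α β hβ hαβ
      obtain ⟨l, hl1, hev⟩ := aux_s_compare hs hβ hαβ
      obtain ⟨N, hN⟩ := exists_nat_ge (11/(l-1))
      have hev1 : ∀ᶠ j in atTop, s α (3*r j) ≤ s β ((3*r j)^l) := h3rtend'.eventually hev
      filter_upwards [hev1, eventually_ge_atTop (max N 1)] with j hj1 hj2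
      have hjN : (N:ℝ) ≤ (j:ℝ) := by exact_mod_cast le_trans (le_max_left N 1) hj2
      have hj1' : (1:ℝ) ≤ (j:ℝ) := by exact_mod_cast le_trans (le_max_right N 1) hj2
      have hl0 : (0:ℝ) < l - 1 := by linarith
      have h11 : 11 ≤ (l-1)*(j:ℝ) := by
        have h := hN.trans hjN
        rw [div_le_iff₀ hl0] at h
        linarith [mul_comm ((j:ℝ)) (l-1)]
      have hb1 : 3 * r j ≤ a ^ (j*j+4*j+3) := by
        have hre : r j = a * a ^ (j*j+4*j+3) := by
          show a ^ (j*j+4*j+4) = a * a ^ (j*j+4*j+3)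
          rw [← pow_succ']
        calc 3 * r j = (3*a) * a^(j*j+4*j+3) := by rw [hre]; ring
          _ ≤ 1 * a^(j*j+4*j+3) := mul_le_mul_of_nonneg_right ha3 (by positivity)
          _ = a^(j*j+4*j+3) := one_mul _
      have hb2 : (3*r j)^l ≤ δ (j+1) := by
        have h1 : (3*r j)^l ≤ (a ^ (j*j+4*j+3) : ℝ)^l :=
          Real.rpow_le_rpow (by positivity) hb1 (by linarith)
        have h2 : (a ^ (j*j+4*j+3) : ℝ)^l = a ^ (((j*j+4*j+3 : ℕ):ℝ) * l) := by
          rw [← Real.rpow_natCast a (j*j+4*j+3), ← Real.rpow_mul ha0.le]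
        have hexp : ((((j+1)*(j+1)+5*(j+1)+5 : ℕ)):ℝ) ≤ ((j*j+4*j+3:ℕ):ℝ) * l := by
          push_cast
          nlinarith [mul_le_mul_of_nonneg_right h11 (by positivity : (0:ℝ) ≤ (j:ℝ))]
        have h3 : a ^ (((j*j+4*j+3:ℕ):ℝ) * l) ≤ a ^ ((((j+1)*(j+1)+5*(j+1)+5 : ℕ)):ℝ) :=
          Real.rpow_le_rpow_of_exponent_ge ha0 ha2.le hexp
        have h4 : a ^ ((((j+1)*(j+1)+5*(j+1)+5 : ℕ)):ℝ) = δ (j+1) := by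
          rw [Real.rpow_natCast]
        calc (3*r j)^l ≤ (a ^ (j*j+4*j+3) : ℝ)^l := h1
          _ = a ^ (((j*j+4*j+3 : ℕ):ℝ) * l) := h2
          _ ≤ a ^ ((((j+1)*(j+1)+5*(j+1)+5 : ℕ)):ℝ) := h3
          _ = δ (j+1) := h4
      refine hj1.trans (hs.2.1 β hβ ?_ ?_ hb2)
      · exact ⟨Real.rpow_pos_of_pos (by positivity) l,
          Real.rpow_lt_one (by positivity) (h3r1 j) (by linarith)⟩
      · exact ⟨hδ0 _, hδ1 _⟩
    have hU : ∀ α β : ℝ, 0 < β → β < α →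
        Tendsto (fun ε : ℝ => quantizationNumber μ ε * ENNReal.ofReal (s β ε))
          (𝓝[>] (0:ℝ)) (𝓝 0) →
        Tendsto (fun η : ℝ => coveringNumber F η * ENNReal.ofReal (s α η))
          (𝓝[>] (0:ℝ)) (𝓝 0) := by
      intro α β hβ hαβ hQ0
      have hα : 0 < α := hβ.trans hαβ
      rw [ENNReal.tendsto_nhds_zero]
      intro c hc
      have hc2 : (0:ℝ≥0∞) < c/2 := ENNReal.half_pos hc.ne'
      have hev1 := ENNReal.tendsto_nhds_zero.1 hQ0 _ hc2
      have hofs : Tendsto (fun ε : ℝ => ENNReal.ofReal (s β ε)) (𝓝[>] (0:ℝ)) (𝓝 0) := by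
        simpa using ENNReal.tendsto_ofReal (aux_s_tendsto hs hβ)
      have hev2 := ENNReal.tendsto_nhds_zero.1 hofs _ hc2
      obtain ⟨k₀, hk₀⟩ := eventually_atTop.1 (hstar α β hβ hαβ)
      obtain ⟨k₁, hk₁⟩ := eventually_atTop.1 (hδtend'.eventually (hev1.and hev2))
      set K := max k₀ k₁ with hK
      filter_upwards [Ioo_mem_nhdsGT_of_mem
        (show (0:ℝ) ∈ Ico (0:ℝ) (min (3 * r K) 1) from
          ⟨le_refl 0, lt_min (by positivity) one_pos⟩)] with η hη
      have hη0 : (0:ℝ) < η := hη.1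
      have hη1 : η < 1 := lt_of_lt_of_le hη.2 (min_le_right _ _)
      have hηr : η < 3 * r K := lt_of_lt_of_le hη.2 (min_le_left _ _)
      have hne : {j | 3 * r j ≤ η}.Nonempty := by
        obtain ⟨j, hj⟩ := (h3rtend.eventually_lt_const hη0).exists
        exact ⟨j, hj.le⟩
      set J := sInf {j | 3 * r j ≤ η} with hJ
      have hJmem : 3 * r J ≤ η := Nat.sInf_mem hne
      have hKJ : K < J := by
        by_contra hcon
        push_neg at hcon
        have : r K ≤ r J := hranti hcon
        linarith
      have hJpred : η < 3 * r (J-1) := by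
        have hmem : J - 1 ∉ {j | 3*r j ≤ η} := Nat.notMem_of_lt_sInf (by omega)
        exact not_le.1 hmem
      have hcov' : coveringNumber F η ≤ quantizationNumber μ (δ J) + 1 := hcov J η hJmem
      have hsb : s α η ≤ s β (δ J) := by
        have h1 : s α η ≤ s α (3 * r (J-1)) :=
          hs.2.1 α hα ⟨hη0, hη1⟩ ⟨by positivity, h3r1 _⟩ hJpred.le
        have h2 : s α (3*r (J-1)) ≤ s β (δ ((J-1)+1)) := hk₀ (J-1) (by omega)
        rw [show J - 1 + 1 = J from by omega] at h2
        linarith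
      have hkk := hk₁ J (by omega)
      calc coveringNumber F η * ENNReal.ofReal (s α η)
          ≤ (quantizationNumber μ (δ J) + 1) * ENNReal.ofReal (s β (δ J)) :=
            mul_le_mul' hcov' (ENNReal.ofReal_le_ofReal hsb)
        _ = quantizationNumber μ (δ J) * ENNReal.ofReal (s β (δ J))
            + ENNReal.ofReal (s β (δ J)) := by rw [add_mul, one_mul]
        _ ≤ c/2 + c/2 := add_le_add hkk.1 hkk.2
        _ = c := ENNReal.add_halves c
    have hL : ∀ α β : ℝ, 0 < β → β < α →
        ¬ Tendsto (fun ε : ℝ => quantizationNumber μ ε * ENNReal.ofReal (s β ε))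
          (𝓝[>] (0:ℝ)) (𝓝 ⊤) →
        ¬ Tendsto (fun η : ℝ => coveringNumber F η * ENNReal.ofReal (s α η))
          (𝓝[>] (0:ℝ)) (𝓝 ⊤) := by
      intro α β hβ hαβ hnot htop
      rw [ENNReal.tendsto_nhds_top_iff_nnreal] at hnot
      push_neg at hnot
      obtain ⟨M, hM⟩ := hnot
      have hM' : ∃ᶠ ε in 𝓝[>] (0:ℝ),
          quantizationNumber μ ε * ENNReal.ofReal (s β ε) ≤ (M:ℝ≥0∞) :=
        hM
      set M' : ℝ≥0∞ := (M:ℝ≥0∞) + ENNReal.ofReal (s β (δ 0)) with hM'def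
      have hM'top : M' < ⊤ := by
        rw [hM'def]
        exact ENNReal.add_lt_top.2 ⟨ENNReal.coe_lt_top, ENNReal.ofReal_lt_top⟩
      have hfreq : ∃ᶠ η in 𝓝[>] (0:ℝ),
          coveringNumber F η * ENNReal.ofReal (s α η) ≤ M' := by
        rw [frequently_iff]
        intro U hU
        obtain ⟨u, hu0, huU⟩ := mem_nhdsGT_iff_exists_Ioo_subset.1 hU
        obtain ⟨k₀, hk₀⟩ := eventually_atTop.1 (hstar α β hβ hαβ)
        obtain ⟨k, hkk₀, hk3r⟩ : ∃ k, k₀ ≤ k ∧ 3 * r k < u := by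
          obtain ⟨k, h1, h2⟩ :=
            ((eventually_ge_atTop k₀).and (h3rtend.eventually_lt_const hu0)).exists
          exact ⟨k, h1, h2⟩
        obtain ⟨d, hd1, hd2⟩ :=
          (hM'.and_eventually (Ioo_mem_nhdsGT_of_mem
            (show (0:ℝ) ∈ Ico (0:ℝ) (δ k) from ⟨le_refl 0, hδ0 k⟩))).exists
        have hdne : {i | δ i ≤ d}.Nonempty := by
          obtain ⟨i, hi⟩ := (hδtend.eventually_lt_const hd2.1).exists
          exact ⟨i, hi.le⟩
        set I := sInf {i | δ i ≤ d} with hI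
        have hImem : δ I ≤ d := Nat.sInf_mem hdne
        have hkI : k < I := by
          by_contra hcon
          push_neg at hcon
          have : δ k ≤ δ I := hδanti.antitone hcon
          linarith [hd2.2]
        set J := I - 1 with hJdef
        have hJk : k ≤ J := by omega
        have hJI : J + 1 = I := by omega
        have hdJ : d < δ J := by
          have hnm : J ∉ {i | δ i ≤ d} := Nat.notMem_of_lt_sInf (by omega)
          exact not_le.1 hnm
        refine ⟨3 * r J, huU ⟨by positivity, ?_⟩, ?_⟩
        · have : r J ≤ r k := hranti hJk
          linarith
        · have hcov' : coveringNumber F (3*r J) ≤ quantizationNumber μ (δ J) + 1 :=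
            hcov J _ le_rfl
          have hQle : quantizationNumber μ (δ J) ≤ quantizationNumber μ d :=
            aux_quant_anti μ hdJ.le
          have hdlt1 : d < 1 := lt_trans hd2.2 (hδ1 k)
          have hsb : s α (3*r J) ≤ s β d := by
            have h2 := hk₀ J (le_trans hkk₀ hJk)
            have h3 : s β (δ (J+1)) ≤ s β d :=
              hs.2.1 β hβ ⟨hδ0 _, hδ1 _⟩ ⟨hd2.1, hdlt1⟩ (by rw [hJI]; exact hImem)
            linarith
          have hsb2 : s β d ≤ s β (δ 0) :=
            hs.2.1 β hβ ⟨hd2.1, hdlt1⟩ ⟨hδ0 0, hδ1 0⟩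
              (le_trans hd2.2.le (hδanti.antitone (Nat.zero_le k)))
          calc coveringNumber F (3*r J) * ENNReal.ofReal (s α (3*r J))
              ≤ (quantizationNumber μ (δ J) + 1) * ENNReal.ofReal (s β d) :=
                mul_le_mul' hcov' (ENNReal.ofReal_le_ofReal hsb)
            _ = quantizationNumber μ (δ J) * ENNReal.ofReal (s β d)
                + ENNReal.ofReal (s β d) := by rw [add_mul, one_mul]
            _ ≤ (M:ℝ≥0∞) + ENNReal.ofReal (s β (δ 0)) :=
                add_le_add ((mul_le_mul' hQle le_rfl).trans hd1)
                  (ENNReal.ofReal_le_ofReal hsb2)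
            _ = M' := hM'def.symm
      have hev := htop.eventually_const_lt hM'top
      obtain ⟨η, h1, h2⟩ := (hfreq.and_eventually hev).exists
      exact absurd h1 (not_le.2 h2)
    refine ⟨F, hFmeas, hμF, ?_, ?_⟩
    · refine iSup₂_le fun α hα => ?_
      refine aux_ofReal_le _ hα.1 fun γ hγ0 hγα => ?_
      have hQγ : Tendsto (fun ε : ℝ => quantizationNumber μ ε * ENNReal.ofReal (s γ ε))
          (𝓝[>] (0:ℝ)) (𝓝 ⊤) := by
        by_contra hcon
        exact hL α γ hγ0 hγα hcon hα.2
      exact le_iSup₂ (f := fun (γ:ℝ) _ => ENNReal.ofReal γ) γ ⟨hγ0, hQγ⟩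
    · refine le_iInf₂ fun β hβ => ?_
      refine aux_le_ofReal _ fun γ hγ => ?_
      exact iInf₂_le γ ⟨hβ.1.trans hγ, hU γ β hβ.1 hγ hβ.2⟩

  · -- Case 2 : quantization number is infinite near 0
    push_neg at hfin
    obtain ⟨ε₁, hε₁, hQtop⟩ := hfin
    have hQtop' : ∀ ε : ℝ, 0 < ε → ε ≤ ε₁ → quantizationNumber μ ε = ⊤ := by
      intro ε h1 h2
      exact eq_top_iff.2 (hQtop ▸ aux_quant_anti μ h2)
    have hTT : ∀ γ : ℝ, 0 < γ →
        Tendsto (fun ε : ℝ => quantizationNumber μ ε * ENNReal.ofReal (s γ ε))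
          (𝓝[>] (0:ℝ)) (𝓝 ⊤) := by
      intro γ hγ
      have hev : ∀ᶠ ε in 𝓝[>] (0:ℝ),
          (fun _ => (⊤:ℝ≥0∞)) ε = quantizationNumber μ ε * ENNReal.ofReal (s γ ε) := by
        filter_upwards [Ioo_mem_nhdsGT_of_mem
          (show (0:ℝ) ∈ Ico (0:ℝ) (min ε₁ 1) by exact ⟨le_refl 0, lt_min hε₁ one_pos⟩)]
          with ε hε
        have hε1 : ε ∈ Ioo (0:ℝ) 1 := ⟨hε.1, lt_of_lt_of_le hε.2 (min_le_right _ _)⟩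
        rw [hQtop' ε hε.1 (lt_of_lt_of_le hε.2 (min_le_left _ _)).le,
          ENNReal.top_mul (ENNReal.ofReal_pos.2 (hs.1 γ hγ ε hε1)).ne']
      exact Tendsto.congr' hev tendsto_const_nhds
    refine ⟨Set.univ, MeasurableSet.univ, Measure.measure_univ_pos.2 hμ, ?_, ?_⟩
    · exact iSup₂_le fun γ hγ => le_iSup₂ (f := fun (γ:ℝ) _ => ENNReal.ofReal γ) γ
        ⟨hγ.1, hTT γ hγ.1⟩
    · have hub : upperQuantScale s μ = ⊤ := by
        refine le_antisymm le_top (le_iInf₂ fun γ hγ => ?_)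
        exact absurd (tendsto_nhds_unique hγ.2 (hTT γ hγ.1)) (by simp)
      rw [hub]; exact le_top


end
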